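/- Given agents indexed 1..n with valuations v_1 ≥ v_2 ≥ ... ≥ v_n ≥ 0, budgets B_i ≥ 0, and resource endowments Γ_i ≥ 0, define k* = max{l ∈ [n] : Σ_{i=1}^l B_i/v_i ≤ Σ_{i=l+1}^n Γ_i}. Then the resource distribution x* with x*_i = B_i/v_i for i ≤ k*, x*_{k*+1} = Σ_{i=k*+2}^n Γ_i − Σ_{i=1}^{k*} B_i/v_i, and x*_i = −Γ_i for i ≥ k*+2 maximizes the market liquid welfare MLW(x) = Σ_i (v_i·Γ_i + min{v_i·x_i, B_i}) over all feasible distributions x (i.e., those with Σ_i x_i = 0 and x_i ≥ −Γ_i for all i). -/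

import Mathlib

open Finset

private lemma sum_Icc_split (f : ℕ → ℝ) {a b : ℕ} (h : 1 ≤ a) (h2 : a ≤ b) :
    ∑ i ∈ Icc 1 b, f i = ∑ i ∈ Icc 1 a, f i + ∑ i ∈ Icc (a+1) b, f i := by
  rw [show Icc 1 b = Ioc 0 b from (Finset.Icc_add_one_left_eq_Ioc 0 b).symm,
      show Icc 1 a = Ioc 0 a from (Finset.Icc_add_one_left_eq_Ioc 0 a).symm,
      show Icc (a+1) b = Ioc a b from (Finset.Icc_add_one_left_eq_Ioc a b),
      Finset.sum_Ioc_consecutive _ (Nat.zero_le a) h2]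

private lemma sum_Icc_head (f : ℕ → ℝ) {a b : ℕ} (h : a ≤ b) :
    ∑ i ∈ Icc a b, f i = f a + ∑ i ∈ Icc (a+1) b, f i := by
  rw [show Icc (a+1) b = Ioc a b from (Finset.Icc_add_one_left_eq_Ioc a b),
      ← Finset.Ioc_insert_left h, Finset.sum_insert (by simp)]

/-- Optimal resource distribution (Lemma: Optimal Resource Distribution).
Agents are indexed `1..n` with valuations sorted descending, `k` is the largest
`l ∈ [n]` with `∑_{i=1}^l B_i/v_i ≤ ∑_{i=l+1}^n Γ_i`.  The distribution `xs`
maximizes the market liquid welfare over all feasible distributions. -/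
theorem stmt_0 (n : ℕ) (v B Γ : ℕ → ℝ)
    (hv : ∀ i ∈ Icc 1 n, 0 < v i)
    (hsort : ∀ i ∈ Icc 1 n, ∀ j ∈ Icc 1 n, i ≤ j → v j ≤ v i)
    (hB : ∀ i ∈ Icc 1 n, 0 ≤ B i) (hΓ : ∀ i ∈ Icc 1 n, 0 ≤ Γ i)
    (k : ℕ) (hk1 : 1 ≤ k) (hkn : k ≤ n)
    (hkle : ∑ i ∈ Icc 1 k, B i / v i ≤ ∑ i ∈ Icc (k+1) n, Γ i)
    (hkmax : ∀ l, 1 ≤ l → l ≤ n →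
      (∑ i ∈ Icc 1 l, B i / v i ≤ ∑ i ∈ Icc (l+1) n, Γ i) → l ≤ k)
    (xs : ℕ → ℝ)
    (hxs1 : ∀ i, 1 ≤ i → i ≤ k → xs i = B i / v i)
    (hxs2 : xs (k+1) = ∑ i ∈ Icc (k+2) n, Γ i - ∑ i ∈ Icc 1 k, B i / v i)
    (hxs3 : ∀ i, k+2 ≤ i → i ≤ n → xs i = -Γ i)
    (x : ℕ → ℝ)
    (hfeas1 : ∑ i ∈ Icc 1 n, x i = 0)
    (hfeas2 : ∀ i ∈ Icc 1 n, -Γ i ≤ x i) :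
    ∑ i ∈ Icc 1 n, (v i * Γ i + min (v i * x i) (B i)) ≤
      ∑ i ∈ Icc 1 n, (v i * Γ i + min (v i * xs i) (B i)) := by
  rw [Finset.sum_add_distrib, Finset.sum_add_distrib]
  apply add_le_add_right
  -- Case k = n : trivial pointwise bound
  rcases eq_or_lt_of_le hkn with hkeq | hklt
  · apply Finset.sum_le_sum
    intro i hi
    simp only [mem_Icc] at hi
    have hvi := hv i (by simp [mem_Icc]; omega)
    have hxsi : xs i = B i / v i := hxs1 i hi.1 (by omega)
    rw [hxsi, mul_div_cancel₀ _ (ne_of_gt hvi), min_self]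
    exact min_le_right _ _
  -- Case k < n
  · set t := v (k+1) with ht
    have hk1n : k + 1 ∈ Icc 1 n := by simp [mem_Icc]; omega
    have htpos : 0 < t := hv _ hk1n
    have hsumxs : ∑ i ∈ Icc 1 n, xs i = 0 := by
      rw [sum_Icc_split xs hk1 hkn, sum_Icc_head xs (by omega : k + 1 ≤ n)]
      have h1 : ∑ i ∈ Icc 1 k, xs i = ∑ i ∈ Icc 1 k, B i / v i := by
        apply Finset.sum_congr rfl
        intro i hi
        simp only [mem_Icc] at hi
        exact hxs1 i hi.1 hi.2
      have h2 : ∑ i ∈ Icc (k+2) n, xs i = -∑ i ∈ Icc (k+2) n, Γ i := by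
        rw [← Finset.sum_neg_distrib]
        apply Finset.sum_congr rfl
        intro i hi
        simp only [mem_Icc] at hi
        exact hxs3 i hi.1 hi.2
      rw [h1, h2, hxs2]; ring
    -- pointwise bound
    have key : ∀ i ∈ Icc 1 n,
        min (v i * x i) (B i) ≤ min (v i * xs i) (B i) + t * (x i - xs i) := by
      intro i hi
      simp only [mem_Icc] at hi
      have hvi := hv i (by simp [mem_Icc]; omega)
      have hti : i ≤ k ∨ i = k + 1 ∨ k + 2 ≤ i := by omega
      rcases hti with h | h | h
      · -- i ≤ k
        have hxsi : xs i = B i / v i := hxs1 i hi.1 h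
        have hvt : t ≤ v i := hsort i (by simp [mem_Icc]; omega) (k+1) hk1n (by omega)
        rw [hxsi, mul_div_cancel₀ _ (ne_of_gt hvi), min_self]
        have hvb : v i * (B i / v i) = B i := mul_div_cancel₀ _ (ne_of_gt hvi)
        rcases le_total (v i * x i) (B i) with hle | hle
        · have hx : x i - B i / v i ≤ 0 := by
            have := (mul_le_mul_iff_of_pos_left hvi).mp (show v i * x i ≤ v i * (B i / v i) by
              rw [hvb]; exact hle)
            linarith
          calc min (v i * x i) (B i) ≤ v i * x i := min_le_left _ _
            _ ≤ B i + t * (x i - B i / v i) := by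
                have : v i * (x i - B i / v i) ≤ t * (x i - B i / v i) :=
                  mul_le_mul_of_nonpos_right hvt hx
                nlinarith
        · have hx : 0 ≤ x i - B i / v i := by
            have := (mul_le_mul_iff_of_pos_left hvi).mp (show v i * (B i / v i) ≤ v i * x i by
              rw [hvb]; exact hle)
            linarith
          have : 0 ≤ t * (x i - B i / v i) := mul_nonneg htpos.le hx
          calc min (v i * x i) (B i) ≤ B i := min_le_right _ _
            _ ≤ B i + t * (x i - B i / v i) := by linarith
      · -- i = k + 1
        subst h
        have hmin : min (t * xs (k+1)) (B (k+1)) = t * xs (k+1) := by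
          apply min_eq_left
          have hnot : ¬ (∑ i ∈ Icc 1 (k+1), B i / v i ≤ ∑ i ∈ Icc (k+2) n, Γ i) := by
            intro hcon
            have := hkmax (k+1) (by omega) (by omega) hcon
            omega
          push_neg at hnot
          rw [Finset.sum_Icc_succ_top (by omega : 1 ≤ k + 1)] at hnot
          rw [hxs2]
          have hlt : ∑ i ∈ Icc (k+2) n, Γ i - ∑ i ∈ Icc 1 k, B i / v i < B (k+1) / v (k+1) := by
            linarith
          calc t * (∑ i ∈ Icc (k+2) n, Γ i - ∑ i ∈ Icc 1 k, B i / v i)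
              ≤ t * (B (k+1) / v (k+1)) := by
                exact mul_le_mul_of_nonneg_left hlt.le htpos.le
            _ = B (k+1) := mul_div_cancel₀ _ (ne_of_gt htpos)
        rw [hmin]
        calc min (v (k+1) * x (k+1)) (B (k+1)) ≤ v (k+1) * x (k+1) := min_le_left _ _
          _ = t * xs (k+1) + t * (x (k+1) - xs (k+1)) := by ring
      · -- i ≥ k + 2
        have hxsi : xs i = -Γ i := hxs3 i h hi.2
        have hvt : v i ≤ t := hsort (k+1) hk1n i (by simp [mem_Icc]; omega) (by omega)
        have hΓi : 0 ≤ Γ i := hΓ i (by simp [mem_Icc]; omega)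
        have hBi : 0 ≤ B i := hB i (by simp [mem_Icc]; omega)
        have hxfeas : -Γ i ≤ x i := hfeas2 i (by simp [mem_Icc]; omega)
        have hmin : min (v i * xs i) (B i) = v i * xs i := by
          apply min_eq_left
          rw [hxsi]; nlinarith
        rw [hmin, hxsi]
        calc min (v i * x i) (B i) ≤ v i * x i := min_le_left _ _
          _ ≤ v i * (-Γ i) + t * (x i - -Γ i) := by nlinarith
    calc ∑ i ∈ Icc 1 n, min (v i * x i) (B i)
        ≤ ∑ i ∈ Icc 1 n, (min (v i * xs i) (B i) + t * (x i - xs i)) :=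
          Finset.sum_le_sum key
      _ = ∑ i ∈ Icc 1 n, min (v i * xs i) (B i) := by
          rw [Finset.sum_add_distrib, ← Finset.mul_sum, Finset.sum_sub_distrib,
            hfeas1, hsumxs]
          ring
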